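/- Let 1 ≤ k ≤ n and let c be a character with $ ≤ c such that no position p > k has BWT[p] = c. (i) If no character strictly greater than c occurs in T, then no suffix of T is strictly greater than the string c · T[SA[k]..n]. (ii) Otherwise, let c' be the smallest character strictly greater than c that occurs in T, and let p be the smallest position with BWT[p] = c'; then such p exists, SA[p] > 1, and T[SA[p]−1..n] is the lexicographically smallest suffix of T that is strictly greater than c · T[SA[k]..n]. -/

import Mathlib

variable {α : Type*} [LinearOrder α]

/-- The suffix `T[p..n]` of a 1-indexed string `T[1..n]`, as a list. -/
def sfx (T : ℕ → α) (n p : ℕ) : List α :=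
  (List.range (n + 1 - p)).map (fun d => T (p + d))

/-- The Burrows–Wheeler transform determined by the text `T`, its suffix array `SA`,
and the end-of-string character `dollar`:  `BWT[i] = T[SA[i]-1]` if `SA[i] > 1`,
and `BWT[i] = $` if `SA[i] = 1`. -/
def bwt (T : ℕ → α) (SA : ℕ → ℕ) (dollar : α) (i : ℕ) : α :=
  if SA i = 1 then dollar else T (SA i - 1)

set_option linter.unusedSectionVars false

lemma sfx_cons (T : ℕ → α) {n p : ℕ} (h : p ≤ n) :
    sfx T n p = T p :: sfx T n (p + 1) := by
  unfold sfx
  have h1 : n + 1 - p = (n - p) + 1 := by omega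
  have h2 : n + 1 - (p + 1) = n - p := by omega
  rw [h1, h2, List.range_succ_eq_map, List.map_cons, List.map_map]
  simp only [Nat.add_zero]
  congr 1
  apply List.map_congr_left
  intro d _
  simp [Function.comp]
  ring_nf

/-- Suppose `$ ≤ c` and no position `p > k` has `BWT[p] = c`.
(i) If no character strictly greater than `c` occurs in `T`, then no suffix of `T`
is strictly greater than `c · T[SA[k]..n]`.  (ii) Otherwise, letting `c'` be the
smallest character strictly greater than `c` occurring in `T`, the smallest position
`p` with `BWT[p] = c'` exists, satisfies `SA[p] > 1`, and `T[SA[p]-1..n]` is the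
lexicographically smallest suffix of `T` strictly greater than `c · T[SA[k]..n]`. -/
theorem statement2
    (n : ℕ) (T : ℕ → α) (dollar : α) (SA : ℕ → ℕ)
    -- `T[1..n]` is a string of length `n ≥ 1` ending with `$`,
    -- which is smaller than every other character and occurs only at position `n`
    (hn : 1 ≤ n) (hTn : T n = dollar)
    (hdollar : ∀ p, 1 ≤ p → p < n → dollar < T p)
    -- `SA` is a permutation of `{1,...,n}` sorting the suffixes lexicographically
    (hSAran : ∀ i, 1 ≤ i → i ≤ n → 1 ≤ SA i ∧ SA i ≤ n)
    (hSAsurj : ∀ p, 1 ≤ p → p ≤ n → ∃ i, 1 ≤ i ∧ i ≤ n ∧ SA i = p)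
    (hSAmono : ∀ i j, 1 ≤ i → i < j → j ≤ n → sfx T n (SA i) < sfx T n (SA j))
    (k : ℕ) (hk1 : 1 ≤ k) (hk2 : k ≤ n)
    (c : α) (hc : dollar ≤ c)
    (hnoc : ∀ p, k < p → p ≤ n → bwt T SA dollar p ≠ c) :
    -- (i)
    ((¬ ∃ d, c < d ∧ ∃ q, 1 ≤ q ∧ q ≤ n ∧ T q = d) →
      ∀ q, 1 ≤ q → q ≤ n → ¬ c :: sfx T n (SA k) < sfx T n q) ∧
    -- (ii)
    (∀ c', c < c' → (∃ q, 1 ≤ q ∧ q ≤ n ∧ T q = c') →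
      (∀ d, c < d → (∃ q, 1 ≤ q ∧ q ≤ n ∧ T q = d) → c' ≤ d) →
      ∃ p, 1 ≤ p ∧ p ≤ n ∧ bwt T SA dollar p = c' ∧
        (∀ q, 1 ≤ q → q ≤ n → bwt T SA dollar q = c' → p ≤ q) ∧
        1 < SA p ∧
        c :: sfx T n (SA k) < sfx T n (SA p - 1) ∧
        ∀ q, 1 ≤ q → q ≤ n → c :: sfx T n (SA k) < sfx T n q →
          sfx T n (SA p - 1) ≤ sfx T n q) := by
  classical
  -- monotonicity in ≤ form
  have hmono' : ∀ i j, 1 ≤ i → i ≤ j → j ≤ n → sfx T n (SA i) ≤ sfx T n (SA j) := by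
    intro i j hi hij hj
    rcases lt_or_eq_of_le hij with h | h
    · exact le_of_lt (hSAmono i j hi h hj)
    · rw [h]
  -- key lemma: if T q = c then sfx (SA k) is not < sfx (q+1)
  have key : ∀ q, 1 ≤ q → q ≤ n → T q = c → ¬ sfx T n (SA k) < sfx T n (q + 1) := by
    intro q hq1 hq2 hqc
    rcases eq_or_lt_of_le hq2 with h | h
    · have : sfx T n (q + 1) = [] := by subst h; simp [sfx]
      rw [this]
      exact List.not_lt_nil _
    · -- q < n
      obtain ⟨j, hj1, hj2, hj3⟩ := hSAsurj (q + 1) (by omega) (by omega)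
      have hbwt : bwt T SA dollar j = c := by
        unfold bwt; rw [hj3]; rw [if_neg (by omega)]
        simpa using hqc
      have hjk : j ≤ k := by
        by_contra hcon
        exact hnoc j (by omega) hj2 hbwt
      have := hmono' j k hj1 hjk hk2
      rw [hj3] at this
      exact not_lt_of_ge this
  constructor
  · -- part (i)
    intro hno q hq1 hq2 hlt
    rw [sfx_cons T hq2] at hlt
    cases hlt with
    | cons h => exact key q hq1 hq2 rfl h
    | rel h => exact hno ⟨T q, h, q, hq1, hq2, rfl⟩
  · -- part (ii)
    intro c' hcc' ⟨q0, hq01, hq02, hq0⟩ hmin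
    have hq0n : q0 < n := by
      rcases eq_or_lt_of_le hq02 with h | h
      · exfalso; subst h; rw [hTn] at hq0; exact absurd (hq0 ▸ lt_of_le_of_lt hc hcc') (lt_irrefl _)
      · exact h
    obtain ⟨j0, hj01, hj02, hj03⟩ := hSAsurj (q0 + 1) (by omega) (by omega)
    have hbwtj0 : bwt T SA dollar j0 = c' := by
      unfold bwt; rw [hj03, if_neg (by omega)]; simpa using hq0
    have hex : ∃ p, 1 ≤ p ∧ p ≤ n ∧ bwt T SA dollar p = c' := ⟨j0, hj01, hj02, hbwtj0⟩
    set p := Nat.find hex with hp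
    obtain ⟨hp1, hp2, hpbwt⟩ := Nat.find_spec hex
    have hpmin : ∀ q, 1 ≤ q → q ≤ n → bwt T SA dollar q = c' → p ≤ q := by
      intro q h1 h2 h3
      exact Nat.find_le ⟨h1, h2, h3⟩
    have hSAp1 : 1 < SA p := by
      rcases lt_or_eq_of_le (hSAran p hp1 hp2).1 with h | h
      · exact h
      · exfalso
        have : bwt T SA dollar p = dollar := by unfold bwt; rw [if_pos h.symm]
        rw [hpbwt] at this
        exact absurd (this ▸ lt_of_le_of_lt hc hcc') (lt_irrefl _)
    have hSApn : SA p ≤ n := (hSAran p hp1 hp2).2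
    have hTSAp : T (SA p - 1) = c' := by
      have : bwt T SA dollar p = T (SA p - 1) := by unfold bwt; rw [if_neg (by omega)]
      rw [hpbwt] at this; exact this.symm
    have hsfxp : sfx T n (SA p - 1) = c' :: sfx T n (SA p) := by
      have h1 : SA p - 1 ≤ n := by omega
      rw [sfx_cons T h1, hTSAp]
      congr 2
      omega
    refine ⟨p, hp1, hp2, hpbwt, hpmin, hSAp1, ?_, ?_⟩
    · rw [hsfxp]
      exact List.Lex.rel hcc'
    · intro q hq1 hq2 hlt
      rw [sfx_cons T hq2] at hlt ⊢
      cases hlt with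
      | cons h => exact absurd h (key q hq1 hq2 rfl)
      | rel h =>
        have hc'Tq : c' ≤ T q := hmin (T q) h ⟨q, hq1, hq2, rfl⟩
        rcases lt_or_eq_of_le hc'Tq with h2 | h2
        · rw [hsfxp]
          exact le_of_lt (List.Lex.rel h2)
        · -- T q = c'
          have hqn : q < n := by
            rcases eq_or_lt_of_le hq2 with h3 | h3
            · exfalso; subst h3; rw [hTn] at h2
              exact absurd (h2 ▸ lt_of_le_of_lt hc hcc') (lt_irrefl _)
            · exact h3
          obtain ⟨j, hj1, hj2, hj3⟩ := hSAsurj (q + 1) (by omega) (by omega)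
          have hbwtj : bwt T SA dollar j = c' := by
            unfold bwt; rw [hj3, if_neg (by omega)]
            simpa using h2.symm
          have hpj : p ≤ j := hpmin j hj1 hj2 hbwtj
          have hle : sfx T n (SA p) ≤ sfx T n (q + 1) := hj3 ▸ hmono' p j hp1 hpj hj2
          rw [hsfxp, h2]
          exact List.cons_le_cons (T q) hle
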